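/- arXiv:1010.2947 — 4 statements merged into one kernel-verified Lean document; each statement's English description precedes it below -/
import Mathlib

section
/- Let λ, μ be real constants with μ > 0 and λ + 2μ > 0, let k, l ∈ ℝ with k² + l² > 0, let t ≥ 0, and let g : [0,t] → ℂ be continuous. For m ∈ ℂ define W^{(1)}(m) = −i ∫₀ᵗ (t−s)·φ( (λ+2μ)(k²+l²+m²)(t−s)² )·g(s) ds and W^{(2)}(m) = −i ∫₀ᵗ (t−s)·φ( μ(k²+l²+m²)(t−s)² )·g(s) ds. Then there exists an entire function H : ℂ → ℂ such that for every m ∈ ℂ with k² + l² + m² ≠ 0, H(m) = ( 2k·(λ(k²+l²) + m²(λ+2μ))·W^{(1)}(m) − 4μk m²·W^{(2)}(m) ) / ( k² + l² + m² ). In other words, the function H₁ of the paper extends analytically across the points m = ± i√(k²+l²). -/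
open MeasureTheory intervalIntegral Set

noncomputable section

/-- The entire function `φ(ζ) = ∑ (−1)ⁿ ζⁿ / (2n+1)!`, so that `φ(z²) = sin z / z` for `z ≠ 0`. -/
def phi (ζ : ℂ) : ℂ := ∑' n : ℕ, (-1) ^ n * ζ ^ n / ((2 * n + 1).factorial : ℂ)

lemma summable_aux (q : ℝ) (hq : 0 ≤ q) :
    Summable fun n : ℕ => q ^ n / ((2 * n + 1).factorial : ℝ) := by
  refine Summable.of_nonneg_of_le (fun n => by positivity) (fun n => ?_)
    (Real.summable_pow_div_factorial q)
  exact div_le_div_of_nonneg_left (pow_nonneg hq n) (by positivity)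
    (Nat.cast_le.2 (Nat.factorial_le (by omega)))

lemma norm_phi_term (ζ : ℂ) (n : ℕ) :
    ‖(-1 : ℂ) ^ n * ζ ^ n / ((2 * n + 1).factorial : ℂ)‖
      = ‖ζ‖ ^ n / ((2 * n + 1).factorial : ℝ) := by
  simp [norm_div, norm_pow]

lemma phi_hasSum (ζ : ℂ) :
    HasSum (fun n : ℕ => (-1) ^ n * ζ ^ n / ((2 * n + 1).factorial : ℂ)) (phi ζ) := by
  have hs : Summable fun n : ℕ => (-1 : ℂ) ^ n * ζ ^ n / ((2 * n + 1).factorial : ℂ) := by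
    apply Summable.of_norm
    have := summable_aux ‖ζ‖ (norm_nonneg ζ)
    refine this.congr fun n => ?_
    exact (norm_phi_term ζ n).symm
  exact hs.hasSum

lemma summable_coeff {b : ℕ → ℂ} {C q : ℝ} (hq : 0 ≤ q)
    (hb : ∀ n, ‖b n‖ ≤ C * q ^ n / ((2 * n + 1).factorial : ℝ)) (z : ℂ) :
    Summable fun n : ℕ => b n * z ^ n := by
  apply Summable.of_norm
  refine Summable.of_nonneg_of_le (fun n => norm_nonneg _) (fun n => ?_)
    (((summable_aux (q * ‖z‖) (by positivity)).mul_left C))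
  rw [norm_mul, norm_pow]
  calc ‖b n‖ * ‖z‖ ^ n ≤ (C * q ^ n / ((2 * n + 1).factorial : ℝ)) * ‖z‖ ^ n :=
        mul_le_mul_of_nonneg_right (hb n) (by positivity)
    _ = C * ((q * ‖z‖) ^ n / ((2 * n + 1).factorial : ℝ)) := by ring

lemma entire_tsum {b : ℕ → ℂ} {C q : ℝ} (hq : 0 ≤ q)
    (hb : ∀ n, ‖b n‖ ≤ C * q ^ n / ((2 * n + 1).factorial : ℝ)) :
    Differentiable ℂ fun z : ℂ => ∑' n : ℕ, b n * z ^ n := by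
  set p := FormalMultilinearSeries.ofScalars ℂ b with hp
  have hrad : p.radius = ⊤ := by
    apply p.radius_eq_top_of_summable_norm
    intro r
    refine Summable.of_nonneg_of_le (fun n => by positivity) (fun n => ?_)
      ((summable_aux (q * r) (by positivity)).mul_left C)
    rw [hp, FormalMultilinearSeries.ofScalars_norm]
    calc ‖b n‖ * (r : ℝ) ^ n ≤ (C * q ^ n / ((2 * n + 1).factorial : ℝ)) * (r : ℝ) ^ n :=
          mul_le_mul_of_nonneg_right (hb n) (by positivity)
      _ = C * ((q * r) ^ n / ((2 * n + 1).factorial : ℝ)) := by ring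
  have hball := p.hasFPowerSeriesOnBall (by rw [hrad]; exact ENNReal.zero_lt_top)
  rw [hrad] at hball
  have heq : (fun z : ℂ => ∑' n : ℕ, b n * z ^ n) = p.sum := by
    funext z
    rw [FormalMultilinearSeries.sum]
    refine tsum_congr fun n => ?_
    rw [hp, FormalMultilinearSeries.ofScalars_apply_eq, smul_eq_mul]
  rw [heq]
  intro z
  exact hball.differentiableOn.differentiableAt
    (EMetric.isOpen_ball.mem_nhds (by simp [EMetric.mem_ball, edist_lt_top]))

/-- The coefficients of the power series (in `c = k²+l²+m²`) of the transformed integrals. -/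
def coefI (t : ℝ) (g : ℝ → ℂ) (x : ℂ) (n : ℕ) : ℂ :=
  (-1) ^ n * x ^ n / ((2 * n + 1).factorial : ℂ)
    * ∫ s in (0 : ℝ)..t, ((t - s : ℝ) : ℂ) ^ (2 * n + 1) * g s

lemma coefI_norm_le {t M : ℝ} (ht : 0 ≤ t) {g : ℝ → ℂ}
    (hM : ∀ s ∈ Icc (0 : ℝ) t, ‖g s‖ ≤ M) (x : ℂ) (n : ℕ) :
    ‖coefI t g x n‖ ≤ (M * t * t) * (‖x‖ * t ^ 2) ^ n / ((2 * n + 1).factorial : ℝ) := by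
  have hM0 : 0 ≤ M := le_trans (norm_nonneg _) (hM 0 ⟨le_rfl, ht⟩)
  have hInt : ‖∫ s in (0 : ℝ)..t, ((t - s : ℝ) : ℂ) ^ (2 * n + 1) * g s‖
      ≤ (t ^ (2 * n + 1) * M) * |t - 0| := by
    refine intervalIntegral.norm_integral_le_of_norm_le_const fun s hs => ?_
    rw [Set.uIoc_of_le ht] at hs
    have hs1 : (0 : ℝ) ≤ s := le_of_lt hs.1
    have hs2 : s ≤ t := hs.2
    rw [norm_mul, norm_pow, Complex.norm_real, Real.norm_eq_abs,
      abs_of_nonneg (by linarith : (0:ℝ) ≤ t - s)]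
    refine mul_le_mul (by gcongr <;> linarith) (hM s ⟨hs1, hs2⟩) (norm_nonneg _) (by positivity)
  rw [coefI, norm_mul, norm_phi_term x n]
  calc ‖x‖ ^ n / ((2 * n + 1).factorial : ℝ)
        * ‖∫ s in (0 : ℝ)..t, ((t - s : ℝ) : ℂ) ^ (2 * n + 1) * g s‖
      ≤ ‖x‖ ^ n / ((2 * n + 1).factorial : ℝ) * ((t ^ (2 * n + 1) * M) * |t - 0|) :=
        mul_le_mul_of_nonneg_left hInt (by positivity)
    _ = (M * t * t) * (‖x‖ * t ^ 2) ^ n / ((2 * n + 1).factorial : ℝ) := by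
        rw [abs_of_nonneg (by linarith : (0:ℝ) ≤ t - 0)]
        ring

lemma integral_phi_eq (x cc : ℂ) {t : ℝ} (ht : 0 ≤ t) {g : ℝ → ℂ}
    (hg : ContinuousOn g (Icc (0 : ℝ) t)) {M : ℝ}
    (hM : ∀ s ∈ Icc (0 : ℝ) t, ‖g s‖ ≤ M) :
    (∫ s in (0 : ℝ)..t, ((t - s : ℝ) : ℂ) * phi (x * cc * ((t - s : ℝ) : ℂ) ^ 2) * g s)
      = ∑' n : ℕ, coefI t g x n * cc ^ n := by
  have hM0 : 0 ≤ M := le_trans (norm_nonneg _) (hM 0 ⟨le_rfl, ht⟩)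
  set F : ℕ → ℝ → ℂ := fun n s =>
    ((-1) ^ n * (x * cc) ^ n / ((2 * n + 1).factorial : ℂ))
      * (((t - s : ℝ) : ℂ) ^ (2 * n + 1) * g s) with hF
  -- pointwise sum
  have hFs : ∀ s : ℝ, HasSum (fun n => F n s)
      (((t - s : ℝ) : ℂ) * phi (x * cc * ((t - s : ℝ) : ℂ) ^ 2) * g s) := by
    intro s
    have h := (phi_hasSum (x * cc * ((t - s : ℝ) : ℂ) ^ 2)).mul_right
      (((t - s : ℝ) : ℂ) * g s)
    have he : (fun n : ℕ => (-1) ^ n * (x * cc * ((t - s : ℝ) : ℂ) ^ 2) ^ n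
        / ((2 * n + 1).factorial : ℂ) * (((t - s : ℝ) : ℂ) * g s)) = fun n => F n s := by
      funext n
      rw [hF]
      ring
    rw [he] at h
    have hv : phi (x * cc * ((t - s : ℝ) : ℂ) ^ 2) * (((t - s : ℝ) : ℂ) * g s)
        = ((t - s : ℝ) : ℂ) * phi (x * cc * ((t - s : ℝ) : ℂ) ^ 2) * g s := by ring
    rwa [hv] at h
  -- integrability
  have hw : Continuous fun s : ℝ => ((t - s : ℝ) : ℂ) :=
    Complex.continuous_ofReal.comp (continuous_const.sub continuous_id)
  have hcont : ∀ n, ContinuousOn (F n) (Icc (0 : ℝ) t) := fun n =>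
    continuousOn_const.mul (((hw.pow (2 * n + 1)).continuousOn).mul hg)
  have hint : ∀ n, IntegrableOn (F n) (Ioc (0 : ℝ) t) := fun n =>
    ((hcont n).integrableOn_Icc).mono_set Ioc_subset_Icc_self
  -- norm bound
  have hnorm : ∀ n, ∀ s ∈ Ioc (0 : ℝ) t,
      ‖F n s‖ ≤ (‖x‖ * ‖cc‖) ^ n / ((2 * n + 1).factorial : ℝ) * (t ^ (2 * n + 1) * M) := by
    intro n s hs
    have hs1 : (0 : ℝ) ≤ s := le_of_lt hs.1
    have hs2 : s ≤ t := hs.2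
    rw [hF]
    simp only [norm_mul, norm_pow, norm_div, norm_neg, norm_one, one_pow, one_mul,
      Complex.norm_real, Real.norm_eq_abs, Complex.norm_natCast]
    rw [abs_of_nonneg (by linarith : (0:ℝ) ≤ t - s)]
    refine mul_le_mul_of_nonneg_left ?_ (by positivity)
    exact mul_le_mul (by gcongr <;> linarith) (hM s ⟨hs1, hs2⟩) (norm_nonneg _) (by positivity)
  -- summability of norms of integrals
  have hsumnorm : Summable fun n => ∫ s in Ioc (0 : ℝ) t, ‖F n s‖ := by
    refine Summable.of_nonneg_of_le
      (fun n => integral_nonneg fun s => norm_nonneg _) (fun n => ?_)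
      ((summable_aux (‖x‖ * ‖cc‖ * t ^ 2) (by positivity)).mul_left (M * t * t))
    have hle : (∫ s in Ioc (0 : ℝ) t, ‖F n s‖)
        ≤ ∫ _ in Ioc (0 : ℝ) t,
            (‖x‖ * ‖cc‖) ^ n / ((2 * n + 1).factorial : ℝ) * (t ^ (2 * n + 1) * M) :=
      setIntegral_mono_on (hint n).norm
        (integrableOn_const measure_Ioc_lt_top.ne) measurableSet_Ioc (hnorm n)
    refine hle.trans (le_of_eq ?_)
    rw [setIntegral_const, measureReal_def, Real.volume_Ioc, smul_eq_mul,
      ENNReal.toReal_ofReal (by linarith : (0:ℝ) ≤ t - 0)]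
    ring
  -- swap sum and integral
  have hkey := MeasureTheory.hasSum_integral_of_summable_integral_norm
    (μ := volume.restrict (Ioc (0 : ℝ) t)) (F := F) hint hsumnorm
  have hleft : (∫ s in (0 : ℝ)..t,
      ((t - s : ℝ) : ℂ) * phi (x * cc * ((t - s : ℝ) : ℂ) ^ 2) * g s)
      = ∫ s in Ioc (0 : ℝ) t, ∑' n, F n s := by
    rw [intervalIntegral.integral_of_le ht]
    exact setIntegral_congr_fun measurableSet_Ioc fun s _ => ((hFs s).tsum_eq).symm
  rw [hleft, ← hkey.tsum_eq]
  refine tsum_congr fun n => ?_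
  rw [hF]
  simp only
  rw [MeasureTheory.integral_const_mul, ← intervalIntegral.integral_of_le ht, coefI]
  ring


lemma coefI_norm_le' {t M : ℝ} (ht : 0 ≤ t) {g : ℝ → ℂ}
    (hM : ∀ s ∈ Icc (0 : ℝ) t, ‖g s‖ ≤ M) (x : ℂ) {q : ℝ} (hxq : ‖x‖ * t ^ 2 ≤ q)
    (n : ℕ) : ‖coefI t g x n‖ ≤ (M * t * t) * q ^ n / ((2 * n + 1).factorial : ℝ) := by
  have hM0 : 0 ≤ M := le_trans (norm_nonneg _) (hM 0 ⟨le_rfl, ht⟩)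
  refine (coefI_norm_le ht hM x n).trans ?_
  have h1 : (‖x‖ * t ^ 2) ^ n ≤ q ^ n := pow_le_pow_left₀ (by positivity) hxq n
  exact div_le_div_of_nonneg_right
    (mul_le_mul_of_nonneg_left h1 (mul_nonneg (mul_nonneg hM0 ht) ht)) (by positivity)

lemma coefI_sub_shift_norm_le {t M : ℝ} (ht : 0 ≤ t) {g : ℝ → ℂ}
    (hM : ∀ s ∈ Icc (0 : ℝ) t, ‖g s‖ ≤ M) (x y : ℂ) (n : ℕ) :
    ‖coefI t g x (n + 1) - coefI t g y (n + 1)‖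
      ≤ (2 * (M * t * t) * ((‖x‖ + ‖y‖) * t ^ 2)) * ((‖x‖ + ‖y‖) * t ^ 2) ^ n
          / ((2 * n + 1).factorial : ℝ) := by
  have hM0 : 0 ≤ M := le_trans (norm_nonneg _) (hM 0 ⟨le_rfl, ht⟩)
  have hx : ‖x‖ * t ^ 2 ≤ (‖x‖ + ‖y‖) * t ^ 2 := by nlinarith [norm_nonneg y, sq_nonneg t]
  have hy : ‖y‖ * t ^ 2 ≤ (‖x‖ + ‖y‖) * t ^ 2 := by nlinarith [norm_nonneg x, sq_nonneg t]
  have h1 := coefI_norm_le' ht hM x hx (n + 1)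
  have h2 := coefI_norm_le' ht hM y hy (n + 1)
  have hq0 : (0 : ℝ) ≤ (‖x‖ + ‖y‖) * t ^ 2 := by positivity
  have hstep : ‖coefI t g x (n + 1) - coefI t g y (n + 1)‖
      ≤ 2 * (M * t * t) * ((‖x‖ + ‖y‖) * t ^ 2) ^ (n + 1)
          / ((2 * (n + 1) + 1).factorial : ℝ) := by
    refine (norm_sub_le _ _).trans ((add_le_add h1 h2).trans (le_of_eq (by ring)))
  refine hstep.trans ?_
  rw [show 2 * (M * t * t) * ((‖x‖ + ‖y‖) * t ^ 2) ^ (n + 1)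
      = (2 * (M * t * t) * ((‖x‖ + ‖y‖) * t ^ 2)) * ((‖x‖ + ‖y‖) * t ^ 2) ^ n by ring]
  refine div_le_div_of_nonneg_left ?_ (by positivity) ?_
  · have : (0 : ℝ) ≤ M * t * t := mul_nonneg (mul_nonneg hM0 ht) ht
    positivity
  · exact Nat.cast_le.2 (Nat.factorial_le (by omega))

lemma shift_tsum_eq {b c : ℕ → ℂ} (h0 : b 0 = c 0) (z : ℂ)
    (hsb : Summable fun n : ℕ => b n * z ^ n) (hsc : Summable fun n : ℕ => c n * z ^ n)
    (hsd : Summable fun n : ℕ => (b (n + 1) - c (n + 1)) * z ^ n) :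
    z * (∑' n : ℕ, (b (n + 1) - c (n + 1)) * z ^ n)
      = (∑' n : ℕ, b n * z ^ n) - (∑' n : ℕ, c n * z ^ n) := by
  have h2 := hsd.hasSum.mul_left z
  have he : (fun n : ℕ => z * ((b (n + 1) - c (n + 1)) * z ^ n))
      = fun n : ℕ => (b (n + 1) - c (n + 1)) * z ^ (n + 1) := by
    funext n; ring
  rw [he] at h2
  have h4 : HasSum (fun n : ℕ => (b n - c n) * z ^ n)
      (z * (∑' n : ℕ, (b (n + 1) - c (n + 1)) * z ^ n)
        + ∑ i ∈ Finset.range 1, (b i - c i) * z ^ i) :=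
    (hasSum_nat_add_iff 1).1 h2
  rw [Finset.sum_range_one, h0, sub_self, zero_mul, add_zero] at h4
  have h5 : HasSum (fun n : ℕ => (b n - c n) * z ^ n)
      ((∑' n : ℕ, b n * z ^ n) - (∑' n : ℕ, c n * z ^ n)) := by
    refine (hsb.hasSum.sub hsc.hasSum).congr_fun fun n => ?_
    ring
  exact h4.unique h5

/-- The function `H₁` of the paper extends analytically across the points `m = ± i√(k²+l²)`:
there is an entire function `H` agreeing with
`(2k(λ(k²+l²)+m²(λ+2μ))W⁽¹⁾ − 4μk m² W⁽²⁾)/(k²+l²+m²)` wherever `k²+l²+m² ≠ 0`. -/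
theorem H1_extends_entire (lam mu : ℝ) (hmu : 0 < mu) (hl : 0 < lam + 2 * mu)
    (k l : ℝ) (hkl : 0 < k ^ 2 + l ^ 2) (t : ℝ) (ht : 0 ≤ t)
    (g : ℝ → ℂ) (hg : ContinuousOn g (Icc (0 : ℝ) t)) :
    ∃ H : ℂ → ℂ, Differentiable ℂ H ∧
      ∀ m : ℂ, (k : ℂ) ^ 2 + (l : ℂ) ^ 2 + m ^ 2 ≠ 0 →
        H m = (2 * (k : ℂ) * ((lam : ℂ) * ((k : ℂ) ^ 2 + (l : ℂ) ^ 2)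
                  + m ^ 2 * ((lam : ℂ) + 2 * (mu : ℂ))) *
                (-Complex.I * ∫ s in (0 : ℝ)..t, ((t - s : ℝ) : ℂ) *
                  phi (((lam : ℂ) + 2 * (mu : ℂ)) * ((k : ℂ) ^ 2 + (l : ℂ) ^ 2 + m ^ 2) *
                    ((t - s : ℝ) : ℂ) ^ 2) * g s)
              - 4 * (mu : ℂ) * (k : ℂ) * m ^ 2 *
                (-Complex.I * ∫ s in (0 : ℝ)..t, ((t - s : ℝ) : ℂ) *
                  phi ((mu : ℂ) * ((k : ℂ) ^ 2 + (l : ℂ) ^ 2 + m ^ 2) *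
                    ((t - s : ℝ) : ℂ) ^ 2) * g s)) /
            ((k : ℂ) ^ 2 + (l : ℂ) ^ 2 + m ^ 2) := by
  obtain ⟨M, hM⟩ := isCompact_Icc.exists_bound_of_continuousOn hg
  have hM0 : 0 ≤ M := le_trans (norm_nonneg _) (hM 0 ⟨le_rfl, ht⟩)
  have hQ0 : (0 : ℝ) ≤ (‖((lam : ℂ) + 2 * (mu : ℂ))‖ + ‖((mu : ℂ))‖) * t ^ 2 := by positivity
  have hxq1 : ‖((lam : ℂ) + 2 * (mu : ℂ))‖ * t ^ 2
      ≤ (‖((lam : ℂ) + 2 * (mu : ℂ))‖ + ‖((mu : ℂ))‖) * t ^ 2 := by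
    nlinarith [norm_nonneg ((mu : ℂ)), sq_nonneg t]
  have hxq2 : ‖((mu : ℂ))‖ * t ^ 2
      ≤ (‖((lam : ℂ) + 2 * (mu : ℂ))‖ + ‖((mu : ℂ))‖) * t ^ 2 := by
    nlinarith [norm_nonneg ((lam : ℂ) + 2 * (mu : ℂ)), sq_nonneg t]
  have hb1le := fun n => coefI_norm_le' ht hM ((lam : ℂ) + 2 * (mu : ℂ)) hxq1 n
  have hb2le := fun n => coefI_norm_le' ht hM ((mu : ℂ)) hxq2 n
  have hdsle := fun n => coefI_sub_shift_norm_le ht hM ((lam : ℂ) + 2 * (mu : ℂ)) ((mu : ℂ)) n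
  have hE1 : Differentiable ℂ fun z : ℂ =>
      ∑' n : ℕ, coefI t g ((lam : ℂ) + 2 * (mu : ℂ)) n * z ^ n := entire_tsum hQ0 hb1le
  have hE3 : Differentiable ℂ fun z : ℂ =>
      ∑' n : ℕ, (coefI t g ((lam : ℂ) + 2 * (mu : ℂ)) (n + 1)
        - coefI t g ((mu : ℂ)) (n + 1)) * z ^ n := entire_tsum hQ0 hdsle
  have hc : Differentiable ℂ fun m : ℂ => (k : ℂ) ^ 2 + (l : ℂ) ^ 2 + m ^ 2 := by
    fun_prop
  refine ⟨fun m => 2 * (k : ℂ) * (lam : ℂ)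
      * (-Complex.I * ∑' n : ℕ, coefI t g ((lam : ℂ) + 2 * (mu : ℂ)) n
          * ((k : ℂ) ^ 2 + (l : ℂ) ^ 2 + m ^ 2) ^ n)
    + 4 * (mu : ℂ) * (k : ℂ) * m ^ 2
      * (-Complex.I * ∑' n : ℕ, (coefI t g ((lam : ℂ) + 2 * (mu : ℂ)) (n + 1)
          - coefI t g ((mu : ℂ)) (n + 1)) * ((k : ℂ) ^ 2 + (l : ℂ) ^ 2 + m ^ 2) ^ n),
    ?_, ?_⟩
  · apply Differentiable.add
    · exact (differentiable_const _).mul ((differentiable_const _).mul (hE1.comp hc))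
    · exact ((differentiable_const _).mul (differentiable_pow 2)).mul
        ((differentiable_const _).mul (hE3.comp hc))
  · intro m hm
    rw [integral_phi_eq ((lam : ℂ) + 2 * (mu : ℂ)) ((k : ℂ) ^ 2 + (l : ℂ) ^ 2 + m ^ 2) ht hg hM,
      integral_phi_eq ((mu : ℂ)) ((k : ℂ) ^ 2 + (l : ℂ) ^ 2 + m ^ 2) ht hg hM]
    have h0 : coefI t g ((lam : ℂ) + 2 * (mu : ℂ)) 0 = coefI t g ((mu : ℂ)) 0 := by
      simp [coefI]
    have hG := shift_tsum_eq h0 ((k : ℂ) ^ 2 + (l : ℂ) ^ 2 + m ^ 2)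
      (summable_coeff hQ0 hb1le _) (summable_coeff hQ0 hb2le _)
      (summable_coeff hQ0 hdsle _)
    rw [eq_div_iff hm]
    linear_combination (4 * (mu : ℂ) * (k : ℂ) * m ^ 2 * (-Complex.I)) * hG
end
end

section
/- Let λ, μ be real constants with μ > 0 and λ + 2μ > 0, let k, l ∈ ℝ with k² + l² > 0, let t ≥ 0, and let g, h : [0,t] → ℂ be continuous. For m ∈ ℂ and j = 1, 2 define U^{(j)}(m) = −i ∫₀ᵗ (t−s)·φ( c_j²(k²+l²+m²)(t−s)² )·g(s) ds and V^{(j)}(m) = −i ∫₀ᵗ (t−s)·φ( c_j²(k²+l²+m²)(t−s)² )·h(s) ds, where c₁² = λ+2μ and c₂² = μ. Then there exists an entire function H : ℂ → ℂ such that for every m ∈ ℂ with k² + l² + m² ≠ 0, H(m) = ( 4μk m²·U^{(1)}(m) + 4μl m²·V^{(1)}(m) + 2μk(k²+l²−m²)·U^{(2)}(m) + 2μl(k²+l²−m²)·V^{(2)}(m) ) / ( k² + l² + m² ). In other words, the function H₃ of the paper extends analytically across the points m = ± i√(k²+l²). -/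
open MeasureTheory intervalIntegral Set

noncomputable section

/-- The sine-kernel transform `U⁽ʲ⁾` (resp. `V⁽ʲ⁾`) of a boundary value `g`,
with wave speed squared `c²` and Fourier variables `k, l, m`. -/
def sineTransform (c2 : ℂ) (k l : ℝ) (t : ℝ) (g : ℝ → ℂ) (m : ℂ) : ℂ :=
  -Complex.I * ∫ s in (0 : ℝ)..t, ((t - s : ℝ) : ℂ) *
    phi (c2 * ((k : ℂ) ^ 2 + (l : ℂ) ^ 2 + m ^ 2) * ((t - s : ℝ) : ℂ) ^ 2) * g s

namespace H3Aux

/-- Coefficients of the auxiliary entire function `φ₁` with `φ(ζ) = 1 + ζ φ₁(ζ)`. -/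
def c1 (n : ℕ) : ℂ := (-1) ^ (n + 1) / ((2 * n + 3).factorial : ℂ)

def phi1 (ζ : ℂ) : ℂ := ∑' n : ℕ, c1 n * ζ ^ n

lemma summable_of_factorial_bound (a : ℕ → ℂ) (ha : ∀ n, ‖a n‖ ≤ ((n.factorial : ℝ))⁻¹)
    (z : ℂ) : Summable fun n => a n * z ^ n := by
  refine Summable.of_norm (Summable.of_nonneg_of_le (fun n => norm_nonneg _) (fun n => ?_)
    (Real.summable_pow_div_factorial ‖z‖))
  rw [norm_mul, norm_pow]
  calc ‖a n‖ * ‖z‖ ^ n ≤ (n.factorial : ℝ)⁻¹ * ‖z‖ ^ n := by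
        gcongr
        exact ha n
    _ = ‖z‖ ^ n / n.factorial := by ring

lemma entire_of_factorial_bound (a : ℕ → ℂ) (ha : ∀ n, ‖a n‖ ≤ ((n.factorial : ℝ))⁻¹) :
    Differentiable ℂ fun z : ℂ => ∑' n : ℕ, a n * z ^ n := by
  set p := FormalMultilinearSeries.ofScalars ℂ a with hp
  have hpn : ∀ n, ‖p n‖ ≤ ‖a n‖ := by
    intro n
    rw [hp, FormalMultilinearSeries.ofScalars]
    calc ‖a n • ContinuousMultilinearMap.mkPiAlgebraFin ℂ n ℂ‖
        = ‖a n‖ * ‖ContinuousMultilinearMap.mkPiAlgebraFin ℂ n ℂ‖ :=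
          norm_smul (a n) (ContinuousMultilinearMap.mkPiAlgebraFin ℂ n ℂ)
      _ ≤ ‖a n‖ := by
          rw [ContinuousMultilinearMap.norm_mkPiAlgebraFin, mul_one]
  have hrad : p.radius = ⊤ := by
    apply FormalMultilinearSeries.radius_eq_top_of_summable_norm
    intro r
    refine Summable.of_nonneg_of_le (fun n => by positivity) (fun n => ?_)
      (Real.summable_pow_div_factorial (r : ℝ))
    calc ‖p n‖ * (r : ℝ) ^ n ≤ (n.factorial : ℝ)⁻¹ * (r : ℝ) ^ n := by
          gcongr
          exact (hpn n).trans (ha n)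
      _ = (r : ℝ) ^ n / n.factorial := by ring
  have hball : HasFPowerSeriesOnBall p.sum p 0 ⊤ := by
    have h0 : (0 : ENNReal) < p.radius := by rw [hrad]; exact ENNReal.zero_lt_top
    have := p.hasFPowerSeriesOnBall h0
    rwa [hrad] at this
  have hd : Differentiable ℂ p.sum := by
    have := hball.differentiableOn
    rwa [Metric.emetric_ball_top, differentiableOn_univ] at this
  have hfun : (fun z : ℂ => ∑' n : ℕ, a n * z ^ n) = p.sum := by
    funext z
    rw [show p.sum z = FormalMultilinearSeries.ofScalarsSum a z from rfl,
      FormalMultilinearSeries.ofScalars_sum_eq]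
    simp [smul_eq_mul]
  rw [hfun]
  exact hd

lemma c1_bound (n : ℕ) : ‖c1 n‖ ≤ ((n.factorial : ℝ))⁻¹ := by
  have h1 : ‖c1 n‖ = (((2 * n + 3).factorial : ℝ))⁻¹ := by
    rw [c1, norm_div, norm_pow, norm_neg, norm_one, one_pow, Complex.norm_natCast, one_div]
  rw [h1]
  have h2 : (n.factorial : ℝ) ≤ ((2 * n + 3).factorial : ℝ) :=
    Nat.cast_le.2 (Nat.factorial_le (by omega))
  have h3 : (0 : ℝ) < n.factorial := by positivity
  exact inv_anti₀ h3 h2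

lemma phi1_diff : Differentiable ℂ phi1 :=
  entire_of_factorial_bound c1 c1_bound

lemma phi1_deriv_cont : Continuous (deriv phi1) := by
  have h : AnalyticOnNhd ℂ phi1 univ := fun z _ => phi1_diff.analyticAt z
  exact continuous_iff_continuousAt.2 fun z => (h.deriv z (mem_univ z)).continuousAt

lemma phi_eq (ζ : ℂ) : phi ζ = 1 + ζ * phi1 ζ := by
  have hb : ∀ n : ℕ, ‖(-1 : ℂ) ^ n / ((2 * n + 1).factorial : ℂ)‖ ≤ ((n.factorial : ℝ))⁻¹ := by
    intro n
    have h1 : ‖(-1 : ℂ) ^ n / ((2 * n + 1).factorial : ℂ)‖ = (((2 * n + 1).factorial : ℝ))⁻¹ := by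
      rw [norm_div, norm_pow, norm_neg, norm_one, one_pow, Complex.norm_natCast, one_div]
    rw [h1]
    have h2 : (n.factorial : ℝ) ≤ ((2 * n + 1).factorial : ℝ) :=
      Nat.cast_le.2 (Nat.factorial_le (by omega))
    have h3 : (0 : ℝ) < n.factorial := by positivity
    exact inv_anti₀ h3 h2
  have hs : Summable fun n : ℕ => ((-1 : ℂ) ^ n / ((2 * n + 1).factorial : ℂ)) * ζ ^ n :=
    summable_of_factorial_bound _ hb ζ
  have h0 : phi ζ = ∑' n : ℕ, ((-1 : ℂ) ^ n / ((2 * n + 1).factorial : ℂ)) * ζ ^ n := by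
    rw [phi]
    exact tsum_congr fun n => by ring
  rw [h0, Summable.tsum_eq_zero_add hs]
  have h1 : ((-1 : ℂ) ^ (0 : ℕ) / ((2 * 0 + 1).factorial : ℂ)) * ζ ^ (0 : ℕ) = 1 := by
    norm_num
  rw [h1]
  congr 1
  have h2 : ∀ n : ℕ, ((-1 : ℂ) ^ (n + 1) / ((2 * (n + 1) + 1).factorial : ℂ)) * ζ ^ (n + 1)
      = ζ * (c1 n * ζ ^ n) := by
    intro n
    have : 2 * (n + 1) + 1 = 2 * n + 3 := by ring
    rw [this, c1, pow_succ]
    ring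
  rw [tsum_congr h2, tsum_mul_left]
  rfl

/-- The analytic-in-`m` integrand kernel. -/
def G (c2 S : ℂ) (t : ℝ) (m : ℂ) (s : ℝ) : ℂ :=
  ((t - s : ℝ) : ℂ) * (c2 * ((t - s : ℝ) : ℂ) ^ 2) *
    phi1 (c2 * (S + m ^ 2) * ((t - s : ℝ) : ℂ) ^ 2)

def G' (c2 S : ℂ) (t : ℝ) (m : ℂ) (s : ℝ) : ℂ :=
  ((t - s : ℝ) : ℂ) * (c2 * ((t - s : ℝ) : ℂ) ^ 2) *
    (deriv phi1 (c2 * (S + m ^ 2) * ((t - s : ℝ) : ℂ) ^ 2) *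
      (c2 * (2 * m) * ((t - s : ℝ) : ℂ) ^ 2))

lemma hasDerivAt_G (c2 S : ℂ) (t : ℝ) (m : ℂ) (s : ℝ) :
    HasDerivAt (fun x => G c2 S t x s) (G' c2 S t m s) m := by
  set w : ℂ := ((t - s : ℝ) : ℂ) ^ 2 with hw
  have h0 : HasDerivAt (fun x : ℂ => S + x ^ 2) (2 * m) m := by
    simpa using (hasDerivAt_pow 2 m).const_add S
  have h1 : HasDerivAt (fun x : ℂ => c2 * (S + x ^ 2) * w) (c2 * (2 * m) * w) m :=
    (h0.const_mul c2).mul_const w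
  have h2 : HasDerivAt phi1 (deriv phi1 (c2 * (S + m ^ 2) * w)) (c2 * (S + m ^ 2) * w) :=
    (phi1_diff _).hasDerivAt
  have h3 := (h2.comp m h1).const_mul (((t - s : ℝ) : ℂ) * (c2 * ((t - s : ℝ) : ℂ) ^ 2))
  simpa [G, G', Function.comp, hw, mul_assoc] using h3

lemma continuous_G (c2 S : ℂ) (t : ℝ) :
    Continuous fun p : ℂ × ℝ => G c2 S t p.1 p.2 := by
  have hw : Continuous fun p : ℂ × ℝ => ((t - p.2 : ℝ) : ℂ) :=
    Complex.continuous_ofReal.comp (continuous_const.sub continuous_snd)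
  exact (hw.mul (continuous_const.mul (hw.pow 2))).mul
    (phi1_diff.continuous.comp
      ((continuous_const.mul (continuous_const.add ((continuous_fst).pow 2))).mul (hw.pow 2)))

lemma continuous_G' (c2 S : ℂ) (t : ℝ) :
    Continuous fun p : ℂ × ℝ => G' c2 S t p.1 p.2 := by
  have hw : Continuous fun p : ℂ × ℝ => ((t - p.2 : ℝ) : ℂ) :=
    Complex.continuous_ofReal.comp (continuous_const.sub continuous_snd)
  exact (hw.mul (continuous_const.mul (hw.pow 2))).mul
    ((phi1_deriv_cont.comp
      ((continuous_const.mul (continuous_const.add ((continuous_fst).pow 2))).mul (hw.pow 2))).mul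
      ((continuous_const.mul (continuous_const.mul continuous_fst)).mul (hw.pow 2)))

lemma diff_integral (t : ℝ) (ht : 0 ≤ t) (f : ℝ → ℂ) (hf : ContinuousOn f (Icc 0 t))
    (c2 S : ℂ) :
    Differentiable ℂ fun m : ℂ => ∫ s in (0 : ℝ)..t, G c2 S t m s * f s := by
  intro m₀
  have hfs : ContinuousOn (fun p : ℂ × ℝ => f p.2)
      ((Metric.closedBall m₀ 1) ×ˢ (Icc (0 : ℝ) t)) :=
    hf.comp continuous_snd.continuousOn fun p hp => hp.2
  obtain ⟨C, hC⟩ :=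
    (((isCompact_closedBall m₀ 1).prod isCompact_Icc).exists_bound_of_continuousOn
      (((continuous_G' c2 S t).continuousOn).mul hfs))
  have meas : ∀ x : ℂ, AEStronglyMeasurable (fun s => G c2 S t x s * f s)
      (volume.restrict (Set.uIoc (0 : ℝ) t)) := by
    intro x
    have hc : ContinuousOn (fun s => G c2 S t x s * f s) (Icc (0 : ℝ) t) :=
      (((continuous_G c2 S t).comp (Continuous.prodMk_right x)).continuousOn).mul hf
    exact (hc.aestronglyMeasurable measurableSet_Icc).mono_measure
      (Measure.restrict_mono (by rw [uIoc_of_le ht]; exact Ioc_subset_Icc_self) le_rfl)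
  have meas' : AEStronglyMeasurable (fun s => G' c2 S t m₀ s * f s)
      (volume.restrict (Set.uIoc (0 : ℝ) t)) := by
    have hc : ContinuousOn (fun s => G' c2 S t m₀ s * f s) (Icc (0 : ℝ) t) :=
      (((continuous_G' c2 S t).comp (Continuous.prodMk_right m₀)).continuousOn).mul hf
    exact (hc.aestronglyMeasurable measurableSet_Icc).mono_measure
      (Measure.restrict_mono (by rw [uIoc_of_le ht]; exact Ioc_subset_Icc_self) le_rfl)
  have hint : IntervalIntegrable (fun s => G c2 S t m₀ s * f s) volume 0 t := by
    apply ContinuousOn.intervalIntegrable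
    rw [uIcc_of_le ht]
    exact (((continuous_G c2 S t).comp (Continuous.prodMk_right m₀)).continuousOn).mul hf
  have key := intervalIntegral.hasDerivAt_integral_of_dominated_loc_of_deriv_le
    (F := fun m s => G c2 S t m s * f s) (F' := fun m s => G' c2 S t m s * f s)
    (bound := fun _ => C) (μ := volume) (a := 0) (b := t) (x₀ := m₀) (Metric.ball_mem_nhds m₀ one_pos)
    (Filter.Eventually.of_forall meas) hint meas'
    (Filter.Eventually.of_forall fun s hs x hx => by
      exact hC (x, s) ⟨Metric.ball_subset_closedBall hx,
        Ioc_subset_Icc_self (by rwa [uIoc_of_le ht] at hs)⟩)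
    intervalIntegrable_const
    (Filter.Eventually.of_forall fun s _ x _ => (hasDerivAt_G c2 S t x s).mul_const (f s))
  exact key.2.differentiableAt

lemma sineTransform_split (c2 : ℂ) (k l : ℝ) (t : ℝ) (ht : 0 ≤ t) (f : ℝ → ℂ)
    (hf : ContinuousOn f (Icc 0 t)) (m : ℂ) :
    sineTransform c2 k l t f m =
      (-Complex.I * ∫ s in (0 : ℝ)..t, ((t - s : ℝ) : ℂ) * f s)
      + ((k : ℂ) ^ 2 + (l : ℂ) ^ 2 + m ^ 2) *
        (-Complex.I * ∫ s in (0 : ℝ)..t, G c2 ((k : ℂ) ^ 2 + (l : ℂ) ^ 2) t m s * f s) := by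
  have hw : Continuous fun s : ℝ => ((t - s : ℝ) : ℂ) :=
    Complex.continuous_ofReal.comp (continuous_const.sub continuous_id)
  have h1 : IntervalIntegrable (fun s => ((t - s : ℝ) : ℂ) * f s) volume 0 t := by
    apply ContinuousOn.intervalIntegrable
    rw [uIcc_of_le ht]
    exact hw.continuousOn.mul hf
  have h2 : IntervalIntegrable
      (fun s => ((k : ℂ) ^ 2 + (l : ℂ) ^ 2 + m ^ 2) *
        (G c2 ((k : ℂ) ^ 2 + (l : ℂ) ^ 2) t m s * f s)) volume 0 t := by
    apply ContinuousOn.intervalIntegrable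
    rw [uIcc_of_le ht]
    exact continuousOn_const.mul
      ((((continuous_G c2 _ t).comp (Continuous.prodMk_right m)).continuousOn).mul hf)
  have heq : ∀ s : ℝ, ((t - s : ℝ) : ℂ) *
      phi (c2 * ((k : ℂ) ^ 2 + (l : ℂ) ^ 2 + m ^ 2) * ((t - s : ℝ) : ℂ) ^ 2) * f s
      = ((t - s : ℝ) : ℂ) * f s +
        ((k : ℂ) ^ 2 + (l : ℂ) ^ 2 + m ^ 2) *
          (G c2 ((k : ℂ) ^ 2 + (l : ℂ) ^ 2) t m s * f s) := by
    intro s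
    rw [phi_eq, G]
    ring
  rw [sineTransform]
  simp_rw [heq]
  rw [intervalIntegral.integral_add h1 h2, intervalIntegral.integral_const_mul]
  ring

end H3Aux

open H3Aux

/-- The function `H₃` of the paper extends analytically across the points `m = ± i√(k²+l²)`:
there is an entire function `H` agreeing with
`(4μk m² U⁽¹⁾ + 4μl m² V⁽¹⁾ + 2μk(k²+l²−m²)U⁽²⁾ + 2μl(k²+l²−m²)V⁽²⁾)/(k²+l²+m²)`
wherever `k²+l²+m² ≠ 0`. -/
theorem H3_extends_entire (lam mu : ℝ) (hmu : 0 < mu) (hl : 0 < lam + 2 * mu)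
    (k l : ℝ) (hkl : 0 < k ^ 2 + l ^ 2) (t : ℝ) (ht : 0 ≤ t)
    (g h : ℝ → ℂ) (hg : ContinuousOn g (Icc (0 : ℝ) t))
    (hh : ContinuousOn h (Icc (0 : ℝ) t)) :
    ∃ H : ℂ → ℂ, Differentiable ℂ H ∧
      ∀ m : ℂ, (k : ℂ) ^ 2 + (l : ℂ) ^ 2 + m ^ 2 ≠ 0 →
        H m = (4 * (mu : ℂ) * (k : ℂ) * m ^ 2 *
                  sineTransform ((lam : ℂ) + 2 * (mu : ℂ)) k l t g m
              + 4 * (mu : ℂ) * (l : ℂ) * m ^ 2 *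
                  sineTransform ((lam : ℂ) + 2 * (mu : ℂ)) k l t h m
              + 2 * (mu : ℂ) * (k : ℂ) * ((k : ℂ) ^ 2 + (l : ℂ) ^ 2 - m ^ 2) *
                  sineTransform (mu : ℂ) k l t g m
              + 2 * (mu : ℂ) * (l : ℂ) * ((k : ℂ) ^ 2 + (l : ℂ) ^ 2 - m ^ 2) *
                  sineTransform (mu : ℂ) k l t h m) /
            ((k : ℂ) ^ 2 + (l : ℂ) ^ 2 + m ^ 2) := by
  set S : ℂ := (k : ℂ) ^ 2 + (l : ℂ) ^ 2 with hS
  set c1' : ℂ := (lam : ℂ) + 2 * (mu : ℂ) with hc1'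
  set Ag : ℂ := -Complex.I * ∫ s in (0 : ℝ)..t, ((t - s : ℝ) : ℂ) * g s with hAg
  set Ah : ℂ := -Complex.I * ∫ s in (0 : ℝ)..t, ((t - s : ℝ) : ℂ) * h s with hAh
  set B1g : ℂ → ℂ := fun m => -Complex.I * ∫ s in (0 : ℝ)..t, G c1' S t m s * g s with hB1g
  set B1h : ℂ → ℂ := fun m => -Complex.I * ∫ s in (0 : ℝ)..t, G c1' S t m s * h s with hB1h
  set B2g : ℂ → ℂ := fun m => -Complex.I * ∫ s in (0 : ℝ)..t, G (mu : ℂ) S t m s * g s with hB2g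
  set B2h : ℂ → ℂ := fun m => -Complex.I * ∫ s in (0 : ℝ)..t, G (mu : ℂ) S t m s * h s with hB2h
  refine ⟨fun m => (2 * (mu : ℂ) * (k : ℂ)) * Ag + (2 * (mu : ℂ) * (l : ℂ)) * Ah
      + (4 * (mu : ℂ) * (k : ℂ)) * (m ^ 2 * B1g m)
      + (4 * (mu : ℂ) * (l : ℂ)) * (m ^ 2 * B1h m)
      + (2 * (mu : ℂ) * (k : ℂ)) * ((S - m ^ 2) * B2g m)
      + (2 * (mu : ℂ) * (l : ℂ)) * ((S - m ^ 2) * B2h m), ?_, ?_⟩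
  · have d1g : Differentiable ℂ B1g := (diff_integral t ht g hg c1' S).const_mul _
    have d1h : Differentiable ℂ B1h := (diff_integral t ht h hh c1' S).const_mul _
    have d2g : Differentiable ℂ B2g := (diff_integral t ht g hg (mu : ℂ) S).const_mul _
    have d2h : Differentiable ℂ B2h := (diff_integral t ht h hh (mu : ℂ) S).const_mul _
    have dsq : Differentiable ℂ fun m : ℂ => m ^ 2 := differentiable_pow 2
    exact ((((((differentiable_const _).add (differentiable_const _)).add
      ((dsq.mul d1g).const_mul _)).add ((dsq.mul d1h).const_mul _)).add
      ((((differentiable_const S).sub dsq).mul d2g).const_mul _)).add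
      ((((differentiable_const S).sub dsq).mul d2h).const_mul _))
  · intro m hm
    have hm' : (k : ℂ) ^ 2 + (l : ℂ) ^ 2 + m ^ 2 ≠ 0 := hm
    rw [sineTransform_split c1' k l t ht g hg m, sineTransform_split c1' k l t ht h hh m,
      sineTransform_split (mu : ℂ) k l t ht g hg m, sineTransform_split (mu : ℂ) k l t ht h hh m]
    simp only [hB1g, hB1h, hB2g, hB2h, hAg, hAh, hS, hc1']
    rw [eq_div_iff hm']
    ring
end
end

section
/- Let λ, μ ∈ ℝ with μ ≠ 0 and λ + 2μ ≠ 0, let k, l ∈ ℝ, and let m, m₁₂ ∈ ℂ satisfy (λ+2μ)·m₁₂² = μ·m² − (λ+μ)·(k²+l²). Let C be the 3×3 complex matrix with rows ( 2μk m₁₂ , 2μ m₁₂ l , λ(k²+l²) + m₁₂²(λ+2μ) ), ( −μkl , μ(m²−l²) , 2μml ), ( −μ(m²−k²) , μkl , −2μkm ). Then det C = μ³ m² ( (k²+l²−m²)² − 4(k²+l²)·m·m₁₂ ). -/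
/-- The determinant `Δ₁ = det C` of the coefficient matrix of the linear system for
`U⁽²⁾, V⁽²⁾, W⁽²⁾`: `Δ₁ = μ³ m² ((k²+l²−m²)² − 4(k²+l²) m m₁₂)`. -/
theorem det_C (lam mu : ℝ) (hmu : mu ≠ 0) (hl : lam + 2 * mu ≠ 0) (k l : ℝ)
    (m m12 : ℂ)
    (hrel : ((lam : ℂ) + 2 * (mu : ℂ)) * m12 ^ 2 =
      (mu : ℂ) * m ^ 2 - ((lam : ℂ) + (mu : ℂ)) * ((k : ℂ) ^ 2 + (l : ℂ) ^ 2)) :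
    Matrix.det
      !![2 * (mu : ℂ) * (k : ℂ) * m12,
          2 * (mu : ℂ) * m12 * (l : ℂ),
          (lam : ℂ) * ((k : ℂ) ^ 2 + (l : ℂ) ^ 2) + m12 ^ 2 * ((lam : ℂ) + 2 * (mu : ℂ));
        -((mu : ℂ) * (k : ℂ) * (l : ℂ)),
          (mu : ℂ) * (m ^ 2 - (l : ℂ) ^ 2),
          2 * (mu : ℂ) * m * (l : ℂ);
        -((mu : ℂ) * (m ^ 2 - (k : ℂ) ^ 2)),
          (mu : ℂ) * (k : ℂ) * (l : ℂ),
          -(2 * (mu : ℂ) * (k : ℂ) * m)]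
      = (mu : ℂ) ^ 3 * m ^ 2 *
          (((k : ℂ) ^ 2 + (l : ℂ) ^ 2 - m ^ 2) ^ 2 -
            4 * ((k : ℂ) ^ 2 + (l : ℂ) ^ 2) * m * m12) := by
  simp only [Matrix.det_fin_three]
  simp only [Matrix.cons_val', Matrix.cons_val_zero, Matrix.empty_val',
    Matrix.cons_val_fin_one, Matrix.cons_val_one, Matrix.head_cons, Matrix.head_fin_const,
    Matrix.cons_val_two, Matrix.tail_cons, Matrix.of_apply, Matrix.cons_val_succ]
  linear_combination ((mu:ℂ) * (m ^ 2 - (l:ℂ) ^ 2) * (mu:ℂ) * (m ^ 2 - (k:ℂ) ^ 2) -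
    (mu:ℂ)^2 * (k:ℂ)^2 * (l:ℂ)^2) * hrel
end

section
/- Let λ, μ ∈ ℝ with μ ≠ 0 and λ + 2μ ≠ 0, let k, l ∈ ℝ, and let m, m₂₁ ∈ ℂ satisfy μ·m₂₁² = (λ+2μ)·m² + (λ+μ)·(k²+l²). Let D be the 3×3 complex matrix with rows ( −2μkm , −2μml , λ(k²+l²) + m²(λ+2μ) ), ( −μkl , μ(m₂₁²−l²) , −2μl m₂₁ ), ( μ(k²−m₂₁²) , μkl , 2μk m₂₁ ). Then det D = μ m₂₁² ( ( λ(k²+l²) + m²(λ+2μ) )² − 4μ²(k²+l²)·m·m₂₁ ). -/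
/-- The determinant `Δ₂ = det D` of the coefficient matrix of the linear system for
`U⁽¹⁾, V⁽¹⁾, W⁽¹⁾`: `Δ₂ = μ m₂₁² ((λ(k²+l²)+m²(λ+2μ))² − 4μ²(k²+l²) m m₂₁)`. -/
theorem det_D (lam mu : ℝ) (hmu : mu ≠ 0) (hl : lam + 2 * mu ≠ 0) (k l : ℝ)
    (m m21 : ℂ)
    (hrel : (mu : ℂ) * m21 ^ 2 =
      ((lam : ℂ) + 2 * (mu : ℂ)) * m ^ 2 + ((lam : ℂ) + (mu : ℂ)) * ((k : ℂ) ^ 2 + (l : ℂ) ^ 2)) :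
    Matrix.det
      !![-(2 * (mu : ℂ) * (k : ℂ) * m),
          -(2 * (mu : ℂ) * m * (l : ℂ)),
          (lam : ℂ) * ((k : ℂ) ^ 2 + (l : ℂ) ^ 2) + m ^ 2 * ((lam : ℂ) + 2 * (mu : ℂ));
        -((mu : ℂ) * (k : ℂ) * (l : ℂ)),
          (mu : ℂ) * (m21 ^ 2 - (l : ℂ) ^ 2),
          -(2 * (mu : ℂ) * (l : ℂ) * m21);
        (mu : ℂ) * ((k : ℂ) ^ 2 - m21 ^ 2),
          (mu : ℂ) * (k : ℂ) * (l : ℂ),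
          2 * (mu : ℂ) * (k : ℂ) * m21]
      = (mu : ℂ) * m21 ^ 2 *
          (((lam : ℂ) * ((k : ℂ) ^ 2 + (l : ℂ) ^ 2) + m ^ 2 * ((lam : ℂ) + 2 * (mu : ℂ))) ^ 2 -
            4 * (mu : ℂ) ^ 2 * ((k : ℂ) ^ 2 + (l : ℂ) ^ 2) * m * m21) := by
  simp [Matrix.det_fin_three]
  linear_combination ((mu : ℂ) * m21 ^ 2 *
    ((lam : ℂ) * ((k : ℂ) ^ 2 + (l : ℂ) ^ 2) + m ^ 2 * ((lam : ℂ) + 2 * (mu : ℂ)))) * hrel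
end
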